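/- arXiv:2212.03798 — 6 statements merged into one kernel-verified Lean document; each statement's English description precedes it below -/
import Mathlib

section
/- (Optimism of the windowed rested approximation.) Let $\mu : \mathbb{N} \to [0,1]$ be non-decreasing and concave with increments $\gamma(n) = \mu(n+1) - \mu(n)$. For integers $t \ge 1$, $N \ge 2$ with $N \le t - 1$, and window $1 \le h \le \lfloor N/2 \rfloor$, define $\widetilde{\mu}^h(t) = \frac{1}{h} \sum_{l=N-h+1}^{N} \left(\mu(l) + (t - l)\frac{\mu(l) - \mu(l - h)}{h}\right)$. Then $\widetilde{\mu}^h(t) \ge \mu(t)$. -/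
private lemma gamma_mono (μ : ℕ → ℝ)
    (hconc : ∀ n, μ (n + 2) - μ (n + 1) ≤ μ (n + 1) - μ n) :
    ∀ m n, m ≤ n → μ (n + 1) - μ n ≤ μ (m + 1) - μ m := by
  intro m n hmn
  induction n with
  | zero => simp [Nat.le_zero.mp hmn]
  | succ k ih =>
    rcases Nat.lt_or_ge m (k+1) with hlt | hge
    · exact le_trans (hconc k) (ih (Nat.lt_succ_iff.mp hlt))
    · have : m = k + 1 := le_antisymm hmn hge
      simp [this]

private lemma gap_upper (μ : ℕ → ℝ)
    (hconc : ∀ n, μ (n + 2) - μ (n + 1) ≤ μ (n + 1) - μ n) :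
    ∀ a b : ℕ, a ≤ b → μ b - μ a ≤ ((b : ℝ) - a) * (μ (a + 1) - μ a) := by
  intro a b hab
  induction b, hab using Nat.le_induction with
  | base => simp
  | succ k hk ih =>
    have h1 : μ (k + 1) - μ k ≤ μ (a + 1) - μ a := gamma_mono μ hconc a k hk
    have : μ (k + 1) - μ a = (μ (k + 1) - μ k) + (μ k - μ a) := by ring
    rw [this]
    push_cast
    nlinarith [ih, (Nat.cast_le (α := ℝ)).mpr hk]

private lemma gap_lower (μ : ℕ → ℝ)
    (hconc : ∀ n, μ (n + 2) - μ (n + 1) ≤ μ (n + 1) - μ n) :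
    ∀ a b : ℕ, a ≤ b → ((b : ℝ) - a) * (μ (b + 1) - μ b) ≤ μ b - μ a := by
  intro a b hab
  induction b, hab using Nat.le_induction with
  | base => simp
  | succ k hk ih =>
    have h1 : μ (k + 2) - μ (k + 1) ≤ μ (k + 1) - μ k := hconc k
    have : μ (k + 1) - μ a = (μ (k + 1) - μ k) + (μ k - μ a) := by ring
    rw [this]
    push_cast
    nlinarith [ih, (Nat.cast_le (α := ℝ)).mpr hk]

theorem stmt_11 (μ : ℕ → ℝ) (hrange : ∀ n, μ n ∈ Set.Icc (0 : ℝ) 1)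
    (hincr : ∀ n, 0 ≤ μ (n + 1) - μ n)
    (hconc : ∀ n, μ (n + 2) - μ (n + 1) ≤ μ (n + 1) - μ n)
    (t N h : ℕ) (ht : 1 ≤ t) (hN : 2 ≤ N) (hNt : N ≤ t - 1)
    (hh1 : 1 ≤ h) (hh2 : h ≤ N / 2) :
    μ t ≤ (1 / (h : ℝ)) * ∑ l ∈ Finset.Icc (N - h + 1) N,
      (μ l + ((t : ℝ) - (l : ℝ)) * (μ l - μ (l - h)) / (h : ℝ)) := by
  have hhpos : (0 : ℝ) < h := by exact_mod_cast hh1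
  have h2h : 2 * h ≤ N := by
    have := Nat.div_mul_le_self N 2
    omega
  have hNle : N + 1 ≤ t := by omega
  have hcard : (Finset.Icc (N - h + 1) N).card = h := by
    rw [Nat.card_Icc]; omega
  -- pointwise bound
  have key : ∀ l ∈ Finset.Icc (N - h + 1) N,
      μ t ≤ μ l + ((t : ℝ) - (l : ℝ)) * (μ l - μ (l - h)) / (h : ℝ) := by
    intro l hl
    rw [Finset.mem_Icc] at hl
    have hlh : h ≤ l := by omega
    have hlt : l ≤ t := le_trans hl.2 (by omega)
    have hgap : ((l : ℝ) - (l - h : ℕ)) * (μ (l + 1) - μ l) ≤ μ l - μ (l - h) :=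
      gap_lower μ hconc (l - h) l (by omega)
    have hcast : ((l - h : ℕ) : ℝ) = (l : ℝ) - h := by
      push_cast [Nat.cast_sub hlh]; ring
    rw [hcast] at hgap
    have hgap' : (h : ℝ) * (μ (l + 1) - μ l) ≤ μ l - μ (l - h) := by
      have : (l : ℝ) - ((l : ℝ) - h) = h := by ring
      linarith [hgap, this ▸ hgap]
    have hup : μ t - μ l ≤ ((t : ℝ) - l) * (μ (l + 1) - μ l) :=
      gap_upper μ hconc l t hlt
    have htl : (0 : ℝ) ≤ (t : ℝ) - l := by
      have : (l : ℝ) ≤ t := by exact_mod_cast hlt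
      linarith
    have : ((t : ℝ) - l) * (μ (l + 1) - μ l) ≤ ((t : ℝ) - l) * ((μ l - μ (l - h)) / h) := by
      apply mul_le_mul_of_nonneg_left _ htl
      rw [le_div_iff₀ hhpos]
      linarith [hgap']
    calc μ t ≤ μ l + ((t : ℝ) - l) * (μ (l + 1) - μ l) := by linarith
      _ ≤ μ l + ((t : ℝ) - l) * ((μ l - μ (l - h)) / h) := by linarith
      _ = μ l + ((t : ℝ) - l) * (μ l - μ (l - h)) / h := by ring
  have hsum : (h : ℝ) * μ t ≤ ∑ l ∈ Finset.Icc (N - h + 1) N,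
      (μ l + ((t : ℝ) - (l : ℝ)) * (μ l - μ (l - h)) / (h : ℝ)) := by
    have := Finset.sum_le_sum key
    rw [Finset.sum_const, hcard] at this
    simpa [nsmul_eq_mul] using this
  rw [one_div, inv_mul_eq_div, le_div_iff₀ hhpos]
  linarith [hsum]
end

section
/- (Bias of the windowed rested approximation.) Under the same assumptions, for $N \ge 2$ and $1 \le h \le \lfloor N/2 \rfloor$, the approximation satisfies $\widetilde{\mu}^h(t) - \mu(N+1) \le \frac{1}{2}(2t - 2N + h - 1)\,\gamma(N - 2h + 1)$. -/
theorem stmt_12 (μ : ℕ → ℝ) (hrange : ∀ n, μ n ∈ Set.Icc (0 : ℝ) 1)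
    (hincr : ∀ n, 0 ≤ μ (n + 1) - μ n)
    (hconc : ∀ n, μ (n + 2) - μ (n + 1) ≤ μ (n + 1) - μ n)
    (t N h : ℕ) (hN : 2 ≤ N) (hNt : N + 1 ≤ t)
    (hh1 : 1 ≤ h) (hh2 : h ≤ N / 2) :
    (1 / (h : ℝ)) * (∑ l ∈ Finset.Icc (N - h + 1) N,
        (μ l + ((t : ℝ) - (l : ℝ)) * (μ l - μ (l - h)) / (h : ℝ))) - μ (N + 1) ≤
      (1 / 2) * (2 * (t : ℝ) - 2 * (N : ℝ) + (h : ℝ) - 1) *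
        (μ (N - 2 * h + 2) - μ (N - 2 * h + 1)) := by
  have h2N : 2 * h ≤ N := by omega
  have hmono : Monotone μ := monotone_nat_of_le_succ (fun n => by linarith [hincr n])
  have hganti : Antitone (fun n => μ (n + 1) - μ n) :=
    antitone_nat_of_succ_le (fun n => hconc n)
  have hEq : N - 2 * h + 1 + 1 = N - 2 * h + 2 := by omega
  set g : ℝ := μ (N - 2 * h + 2) - μ (N - 2 * h + 1) with hgdef
  have hg0 : 0 ≤ g := by
    have := hincr (N - 2 * h + 1); rw [hEq] at this; linarith
  have htel : ∀ a k : ℕ, N - 2 * h + 1 ≤ a → μ (a + k) - μ a ≤ k * g := by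
    intro a k hca
    induction k with
    | zero => simp
    | succ k ih =>
      have h1 : μ (a + k + 1) - μ (a + k) ≤ g := by
        have := hganti (show N - 2 * h + 1 ≤ a + k by omega)
        simp only at this
        rw [hEq] at this
        linarith
      have h2 : a + (k + 1) = a + k + 1 := by omega
      rw [h2]
      push_cast
      linarith
  have hh : (0 : ℝ) < h := by positivity
  have hterm : ∀ l ∈ Finset.Icc (N - h + 1) N,
      μ l + ((t : ℝ) - (l : ℝ)) * (μ l - μ (l - h)) / (h : ℝ)
        ≤ μ (N + 1) + ((t : ℝ) - (l : ℝ)) * g := by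
    intro l hl
    simp only [Finset.mem_Icc] at hl
    have h1 : μ l ≤ μ (N + 1) := hmono (by omega)
    have h2 : μ l - μ (l - h) ≤ h * g := by
      have := htel (l - h) h (by omega)
      rw [show l - h + h = l by omega] at this
      exact this
    have htl : (0 : ℝ) ≤ (t : ℝ) - l := by
      have : (l : ℝ) ≤ t := by exact_mod_cast (by omega : l ≤ t)
      linarith
    have h3 : ((t : ℝ) - l) * (μ l - μ (l - h)) / h ≤ ((t : ℝ) - l) * g := by
      rw [div_le_iff₀ hh]
      nlinarith [mul_le_mul_of_nonneg_left h2 htl]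
    linarith
  have hsum := Finset.sum_le_sum hterm
  have hcard : (Finset.Icc (N - h + 1) N).card = h := by
    rw [Nat.card_Icc]; omega
  -- compute the RHS sum
  have hrange' : N + 1 - (N - h + 1) = h := by omega
  have hrsum : ∑ l ∈ Finset.Icc (N - h + 1) N, (μ (N + 1) + ((t : ℝ) - (l : ℝ)) * g)
      = h * μ (N + 1) + ((h : ℝ) * t - (h : ℝ) * (N - h + 1 : ℕ) - (h * (h - 1)) / 2) * g := by
    rw [← Finset.Ico_add_one_right_eq_Icc, Finset.sum_Ico_eq_sum_range, hrange']
    rw [Finset.sum_add_distrib, Finset.sum_const, Finset.card_range]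
    have : ∑ i ∈ Finset.range h, (((t : ℝ) - ((N - h + 1 : ℕ) + i : ℕ)) * g)
        = ((h : ℝ) * t - (h : ℝ) * (N - h + 1 : ℕ) - (h * (h - 1)) / 2) * g := by
      rw [← Finset.sum_mul]
      congr 1
      have hc : ∑ i ∈ Finset.range h, ((i : ℝ)) = (h * (h - 1)) / 2 := by
        have := Finset.sum_range_id_mul_two h
        have hcast : ((∑ i ∈ Finset.range h, i : ℕ) : ℝ) * 2 = (h : ℝ) * ((h : ℝ) - 1) := by
          rw [← Nat.cast_ofNat, ← Nat.cast_mul, this]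
          push_cast [Nat.cast_sub hh1]
          ring
        push_cast at hcast ⊢
        linarith
      push_cast
      simp only [Finset.sum_sub_distrib, Finset.sum_add_distrib, Finset.sum_const,
        Finset.card_range, hc, nsmul_eq_mul]
      have : ((N - h : ℕ) : ℝ) = (N : ℝ) - h := by
        push_cast [Nat.cast_sub (by omega : h ≤ N)]; ring
      rw [this]
      push_cast [Nat.cast_sub (by omega : h ≤ N)]
      ring
    rw [this]
    push_cast
    ring
  rw [hrsum] at hsum
  have hlhs : (1 / (h : ℝ)) * (∑ l ∈ Finset.Icc (N - h + 1) N,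
        (μ l + ((t : ℝ) - (l : ℝ)) * (μ l - μ (l - h)) / (h : ℝ))) - μ (N + 1)
      ≤ (1 / (h : ℝ)) * (((h : ℝ) * t - (h : ℝ) * (N - h + 1 : ℕ) - (h * (h - 1)) / 2) * g) := by
    have := mul_le_mul_of_nonneg_left hsum (le_of_lt (one_div_pos.mpr hh))
    have hne : (h : ℝ) ≠ 0 := ne_of_gt hh
    calc _ ≤ (1 / (h : ℝ)) * ((h : ℝ) * μ (N + 1)
            + ((h : ℝ) * t - (h : ℝ) * (N - h + 1 : ℕ) - (h * (h - 1)) / 2) * g) - μ (N + 1) := by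
          linarith
      _ = (1 / (h : ℝ)) * (((h : ℝ) * t - (h : ℝ) * (N - h + 1 : ℕ) - (h * (h - 1)) / 2) * g) := by
          field_simp
          ring
  refine hlhs.trans (le_of_eq ?_)
  have hne : (h : ℝ) ≠ 0 := ne_of_gt hh
  have hc1 : ((N - h + 1 : ℕ) : ℝ) = (N : ℝ) - h + 1 := by
    push_cast [Nat.cast_sub (by omega : h ≤ N)]; ring
  rw [hc1]
  field_simp
  ring
end

section
/- (Optimism of the deterministic restless estimator.) Let $\mu : \mathbb{N} \to [0,1]$ be non-decreasing and concave with increments $\gamma(s) = \mu(s+1) - \mu(s)$. For rounds $s_1 < s_2 < t$ (the last two pull times and the current round), define $\overline{\mu}(t) = \mu(s_2) + (t - s_2)\frac{\mu(s_2) - \mu(s_1)}{s_2 - s_1}$. Then $\overline{\mu}(t) \ge \mu(t)$ and $\overline{\mu}(t) - \mu(t) \le (t - s_2)\,\gamma(s_1)$. -/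
private lemma gamma_anti (μ : ℕ → ℝ)
    (hconc : ∀ s, μ (s + 2) - μ (s + 1) ≤ μ (s + 1) - μ s) :
    ∀ a b, a ≤ b → μ (b + 1) - μ b ≤ μ (a + 1) - μ a := by
  intro a b hab
  induction b, hab using Nat.le_induction with
  | base => exact le_rfl
  | succ n hn ih => exact le_trans (hconc n) ih

private lemma upper_bd (μ : ℕ → ℝ)
    (hconc : ∀ s, μ (s + 2) - μ (s + 1) ≤ μ (s + 1) - μ s) :
    ∀ a b, a ≤ b → μ b - μ a ≤ ((b : ℝ) - a) * (μ (a + 1) - μ a) := by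
  intro a b hab
  induction b, hab using Nat.le_induction with
  | base => simp
  | succ n hn ih =>
    have h1 : μ (n + 1) - μ n ≤ μ (a + 1) - μ a := gamma_anti μ hconc a n hn
    have : μ (n + 1) - μ a = (μ (n + 1) - μ n) + (μ n - μ a) := by ring
    rw [this]
    push_cast
    nlinarith

private lemma lower_bd (μ : ℕ → ℝ)
    (hconc : ∀ s, μ (s + 2) - μ (s + 1) ≤ μ (s + 1) - μ s) :
    ∀ (a b : ℕ), a ≤ b → ((b : ℝ) - a) * (μ (b + 1) - μ b) ≤ μ b - μ a := by
  intro a b hab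
  induction b, hab using Nat.le_induction with
  | base => simp
  | succ n hn ih =>
    have h1 : μ (n + 2) - μ (n + 1) ≤ μ (n + 1) - μ n := hconc n
    have h2 : (0 : ℝ) ≤ (n : ℝ) - a := by
      have := Nat.cast_le (α := ℝ).mpr hn; linarith
    push_cast
    have h3 : ((n : ℝ) - a) * (μ (n + 2) - μ (n + 1)) ≤ ((n : ℝ) - a) * (μ (n + 1) - μ n) :=
      mul_le_mul_of_nonneg_left h1 h2
    have : ((n : ℝ) + 1 - a) * (μ (n + 1 + 1) - μ (n + 1)) =
        ((n : ℝ) - a) * (μ (n + 2) - μ (n + 1)) + (μ (n + 2) - μ (n + 1)) := by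
      push_cast; ring
    rw [this]
    have h4 : μ (n + 1 + 1) = μ (n + 2) := by norm_num
    linarith

theorem stmt_13 (μ : ℕ → ℝ) (hrange : ∀ s, μ s ∈ Set.Icc (0 : ℝ) 1)
    (hincr : ∀ s, 0 ≤ μ (s + 1) - μ s)
    (hconc : ∀ s, μ (s + 2) - μ (s + 1) ≤ μ (s + 1) - μ s)
    (s₁ s₂ t : ℕ) (h12 : s₁ < s₂) (h2t : s₂ < t) :
    μ t ≤ μ s₂ + ((t : ℝ) - (s₂ : ℝ)) * ((μ s₂ - μ s₁) / ((s₂ : ℝ) - (s₁ : ℝ))) ∧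
      (μ s₂ + ((t : ℝ) - (s₂ : ℝ)) * ((μ s₂ - μ s₁) / ((s₂ : ℝ) - (s₁ : ℝ)))) - μ t ≤
        ((t : ℝ) - (s₂ : ℝ)) * (μ (s₁ + 1) - μ s₁) := by
  have hd : (0 : ℝ) < (s₂ : ℝ) - s₁ := by
    have := Nat.cast_lt (α := ℝ).mpr h12; linarith
  have hts : (0 : ℝ) ≤ (t : ℝ) - s₂ := by
    have := Nat.cast_lt (α := ℝ).mpr h2t; linarith
  set slope : ℝ := (μ s₂ - μ s₁) / ((s₂ : ℝ) - s₁) with hslope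
  -- γ s₂ ≤ slope
  have hlow : ((s₂ : ℝ) - s₁) * (μ (s₂ + 1) - μ s₂) ≤ μ s₂ - μ s₁ :=
    lower_bd μ hconc s₁ s₂ h12.le
  have hg2 : μ (s₂ + 1) - μ s₂ ≤ slope := by
    rw [hslope, le_div_iff₀ hd]; linarith
  -- slope ≤ γ s₁
  have hup : μ s₂ - μ s₁ ≤ ((s₂ : ℝ) - s₁) * (μ (s₁ + 1) - μ s₁) :=
    upper_bd μ hconc s₁ s₂ h12.le
  have hg1 : slope ≤ μ (s₁ + 1) - μ s₁ := by
    rw [hslope, div_le_iff₀ hd]; linarith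
  -- μ t - μ s₂ ≤ (t - s₂) γ s₂
  have hupt : μ t - μ s₂ ≤ ((t : ℝ) - s₂) * (μ (s₂ + 1) - μ s₂) :=
    upper_bd μ hconc s₂ t h2t.le
  -- μ s₂ ≤ μ t
  have hmono : μ s₂ ≤ μ t := by
    have := lower_bd μ hconc s₂ t h2t.le
    nlinarith [hincr t]
  constructor
  · nlinarith
  · nlinarith
end

section
/- (Optimality of the oracle constant policy in rested non-decreasing bandits.) Consider $K$ arms with non-decreasing payoff functions $\mu_i : \mathbb{N}_{\ge 1} \to [0,1]$. For any sequence of pulls $(I_1, \dots, I_T) \in [K]^T$, the collected total payoff $\sum_{t=1}^T \mu_{I_t}(N_{I_t, t})$, where $N_{i,t} = |\{s \le t : I_s = i\}|$, is at most $\max_{i \in [K]} \sum_{l=1}^{T} \mu_i(l)$, i.e., the constant policy playing a single best arm is optimal. -/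
/-- Chebyshev-style averaging: for a monotone sequence, `T` times the sum of the
first `n` terms is at most `n` times the sum of the first `T` terms. -/
lemma cheb_aux (g : ℕ → ℝ) (hg : Monotone g) {n T : ℕ} (hn : n ≤ T) :
    (T : ℝ) * ∑ l ∈ Finset.Icc 1 n, g l ≤ (n : ℝ) * ∑ l ∈ Finset.Icc 1 T, g l := by
  have e1 : ∀ m : ℕ, Finset.Icc 1 m = Finset.Ioc 0 m := fun m => by
    ext x; simp [Nat.lt_iff_add_one_le]
  rw [e1, e1]
  have hsplit : ∑ l ∈ Finset.Ioc 0 n, g l + ∑ l ∈ Finset.Ioc n T, g l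
      = ∑ l ∈ Finset.Ioc 0 T, g l :=
    Finset.sum_Ioc_consecutive g (Nat.zero_le n) hn
  have h1 : ∑ l ∈ Finset.Ioc 0 n, g l ≤ (n : ℝ) * g n := by
    calc ∑ l ∈ Finset.Ioc 0 n, g l ≤ (Finset.Ioc 0 n).card • g n := by
          apply Finset.sum_le_card_nsmul
          intro x hx
          exact hg (Finset.mem_Ioc.mp hx).2
      _ = (n : ℝ) * g n := by simp [Nat.card_Ioc, nsmul_eq_mul]
  have h2 : ((T : ℝ) - n) * g n ≤ ∑ l ∈ Finset.Ioc n T, g l := by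
    calc ((T : ℝ) - n) * g n = ((Finset.Ioc n T).card : ℝ) * g n := by
          rw [Nat.card_Ioc, Nat.cast_sub hn]
      _ ≤ _ := by
          rw [← nsmul_eq_mul]
          apply Finset.card_nsmul_le_sum
          intro x hx
          exact hg (le_of_lt (Finset.mem_Ioc.mp hx).1)
  have hn' : (n : ℝ) ≤ T := Nat.cast_le.mpr hn
  have hn0 : (0 : ℝ) ≤ n := Nat.cast_nonneg n
  rw [← hsplit]
  nlinarith [mul_le_mul_of_nonneg_left h2 hn0,
    mul_le_mul_of_nonneg_left h1 (sub_nonneg.mpr hn')]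

theorem stmt_14 (K T : ℕ) (hK : 0 < K)
    (μ : Fin K → ℕ → ℝ) (hrange : ∀ i n, μ i n ∈ Set.Icc (0 : ℝ) 1)
    (hmono : ∀ i, Monotone (μ i))
    (I : ℕ → Fin K)
    (N : Fin K → ℕ → ℕ)
    (hN : ∀ i t, N i t = ((Finset.Icc 1 t).filter fun s => I s = i).card) :
    ∑ t ∈ Finset.Icc 1 T, μ (I t) (N (I t) t) ≤
      Finset.univ.sup' (Finset.univ_nonempty_iff.mpr (Fin.pos_iff_nonempty.mp hK))
        (fun i => ∑ l ∈ Finset.Icc 1 T, μ i l) := by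
  obtain ⟨i0⟩ := Fin.pos_iff_nonempty.mp hK
  rcases Nat.eq_zero_or_pos T with hT | hT
  · subst hT
    have h0 : Finset.Icc 1 0 = (∅ : Finset ℕ) := by simp
    rw [h0]
    simp only [Finset.sum_empty]
    have := Finset.le_sup' (f := fun i => ∑ l ∈ Finset.Icc 1 0, μ i l)
      (b := i0) (Finset.mem_univ i0)
    simp only [h0, Finset.sum_empty] at this
    exact this
  set c : Fin K → ℕ → ℕ := fun i t => ((Finset.Icc 1 t).filter fun s => I s = i).card
    with hc
  have hmonoc : ∀ i, ∀ s t : ℕ, s ≤ t → c i s ≤ c i t := fun i s t hst =>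
    Finset.card_le_card (Finset.filter_subset_filter _ (Finset.Icc_subset_Icc_right hst))
  have hgroup : ∑ t ∈ Finset.Icc 1 T, μ (I t) (N (I t) t)
      = ∑ i : Fin K, ∑ l ∈ Finset.Icc 1 (c i T), μ i l := by
    rw [← Finset.sum_fiberwise (Finset.Icc 1 T) I (fun t => μ (I t) (N (I t) t))]
    apply Finset.sum_congr rfl
    intro i _
    set A := (Finset.Icc 1 T).filter fun t => I t = i with hA
    have hfib : ∀ t ∈ A, μ (I t) (N (I t) t) = μ i (c i t) := by
      intro t ht
      obtain ⟨_, hIt⟩ := Finset.mem_filter.mp ht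
      rw [hIt, hN]
    rw [Finset.sum_congr rfl hfib]
    have hstrict : ∀ s t, t ∈ A → s < t → c i s < c i t := by
      intro s t ht hst
      apply Finset.card_lt_card
      refine ⟨Finset.filter_subset_filter _ (Finset.Icc_subset_Icc_right hst.le),
        fun hsub => ?_⟩
      obtain ⟨htT, hIt⟩ := Finset.mem_filter.mp ht
      have h1t : 1 ≤ t := (Finset.mem_Icc.mp htT).1
      have hmem : t ∈ (Finset.Icc 1 s).filter fun s' => I s' = i :=
        hsub (Finset.mem_filter.mpr ⟨Finset.mem_Icc.mpr ⟨h1t, le_refl t⟩, hIt⟩)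
      exact absurd ((Finset.mem_Icc.mp (Finset.mem_filter.mp hmem).1).2)
        (not_le.mpr hst)
    have hinj : ∀ s ∈ A, ∀ t ∈ A, c i s = c i t → s = t := by
      intro s hs t ht h
      rcases lt_trichotomy s t with h' | h' | h'
      · exact absurd h (ne_of_lt (hstrict s t ht h'))
      · exact h'
      · exact absurd h.symm (ne_of_lt (hstrict t s hs h'))
    have himg : A.image (c i) = Finset.Icc 1 (c i T) := by
      apply Finset.eq_of_subset_of_card_le
      · intro l hl
        obtain ⟨t, ht, rfl⟩ := Finset.mem_image.mp hl
        obtain ⟨htT, hIt⟩ := Finset.mem_filter.mp ht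
        obtain ⟨h1t, htT'⟩ := Finset.mem_Icc.mp htT
        refine Finset.mem_Icc.mpr ⟨?_, hmonoc i t T htT'⟩
        have hmem : t ∈ (Finset.Icc 1 t).filter fun s => I s = i :=
          Finset.mem_filter.mpr ⟨Finset.mem_Icc.mpr ⟨h1t, le_refl t⟩, hIt⟩
        exact Finset.card_pos.mpr ⟨t, hmem⟩
      · rw [Nat.card_Icc, Finset.card_image_of_injOn hinj]
        simp [hA, hc]
    rw [← himg, Finset.sum_image hinj]
  rw [hgroup]
  set M := Finset.univ.sup' (Finset.univ_nonempty_iff.mpr (Fin.pos_iff_nonempty.mp hK))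
    (fun i => ∑ l ∈ Finset.Icc 1 T, μ i l) with hMdef
  have hsum : ∑ i : Fin K, c i T = T := by
    have h := Finset.card_eq_sum_card_fiberwise
      (f := I) (s := Finset.Icc 1 T) (t := Finset.univ) (fun x _ => Finset.mem_univ _)
    rw [Nat.card_Icc] at h
    simp only [hc]
    omega
  have hMle : ∀ i : Fin K, ∑ l ∈ Finset.Icc 1 T, μ i l ≤ M := fun i => by
    rw [hMdef]
    exact Finset.le_sup' (fun j => ∑ l ∈ Finset.Icc 1 T, μ j l) (Finset.mem_univ i)
  have hle : ∀ i : Fin K, c i T ≤ T := by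
    intro i
    conv_rhs => rw [← hsum]
    exact Finset.single_le_sum (f := fun j : Fin K => c j T)
      (fun j _ => Nat.zero_le _) (Finset.mem_univ i)
  have key : (T : ℝ) * ∑ i : Fin K, ∑ l ∈ Finset.Icc 1 (c i T), μ i l ≤ (T : ℝ) * M := by
    rw [Finset.mul_sum]
    calc ∑ i : Fin K, (T : ℝ) * ∑ l ∈ Finset.Icc 1 (c i T), μ i l
        ≤ ∑ i : Fin K, (c i T : ℝ) * M := by
          apply Finset.sum_le_sum
          intro i _
          calc (T : ℝ) * ∑ l ∈ Finset.Icc 1 (c i T), μ i l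
              ≤ (c i T : ℝ) * ∑ l ∈ Finset.Icc 1 T, μ i l :=
                cheb_aux (μ i) (hmono i) (hle i)
            _ ≤ (c i T : ℝ) * M :=
                mul_le_mul_of_nonneg_left (hMle i) (Nat.cast_nonneg _)
      _ = (T : ℝ) * M := by
          rw [← Finset.sum_mul, ← Nat.cast_sum, hsum]
  exact le_of_mul_le_mul_left key (by exact_mod_cast hT)
end

section
/- (Non-learnability of non-concave rested bandits.) Consider the two 2-armed deterministic rested bandits $\bm{\mu}^A$ and $\bm{\mu}^B$ where $\mu_1^A(n) = \mu_1^B(n) = 1/2$ for all $n$, $\mu_2^A(n) = 0$ if $n \le \lfloor T/3 \rfloor$ and $1$ otherwise, and $\mu_2^B(n) = 0$ for all $n$. Then for any (deterministic) policy $\pi$ mapping observed reward histories to arm choices, $\max\{R_{\bm{\mu}^A}(\pi, T), R_{\bm{\mu}^B}(\pi, T)\} \ge \lfloor T/12 \rfloor$, where the regret $R_{\bm{\mu}}(\pi,T)$ is the optimal total payoff minus the total payoff collected by $\pi$. -/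
/-- A deterministic policy: maps the history of (arm pulled, observed reward) pairs
(most recent first) to the next arm to pull. -/
abbrev Policy : Type := List (Fin 2 × ℝ) → Fin 2

/-- The history generated by running policy `π` on the deterministic rested bandit `μ`
for `t` rounds (most recent observation first). Pulling arm `i` for the `n`-th time
yields reward `μ i n`. -/
def plays (π : Policy) (μ : Fin 2 → ℕ → ℝ) : ℕ → List (Fin 2 × ℝ)
  | 0 => []
  | t + 1 =>
    let hist := plays π μ t
    let i := π hist
    let n := (hist.filter fun p => p.1 = i).length + 1
    (i, μ i n) :: hist

/-- The total payoff collected by policy `π` on bandit `μ` over horizon `T`. -/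
noncomputable def totalPayoff (π : Policy) (μ : Fin 2 → ℕ → ℝ) (T : ℕ) : ℝ :=
  ((plays π μ T).map fun p => p.2).sum

/-- The optimal total payoff over horizon `T`. -/
noncomputable def optPayoff (μ : Fin 2 → ℕ → ℝ) (T : ℕ) : ℝ :=
  ⨆ π : Policy, totalPayoff π μ T

/-- Bandit A: arm 0 is constant 1/2; arm 2's payoff is 0 for the first ⌊T/3⌋ pulls
and 1 afterwards. -/
noncomputable def muA (T : ℕ) : Fin 2 → ℕ → ℝ := fun i n =>
  if i = 0 then 1 / 2 else if n ≤ T / 3 then 0 else 1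

/-- Bandit B: arm 0 is constant 1/2; arm 2's payoff is identically 0. -/
noncomputable def muB : Fin 2 → ℕ → ℝ := fun i n =>
  if i = 0 then 1 / 2 else 0

/- ======================= auxiliary lemmas ======================= -/

lemma fin2 (i : Fin 2) : i = 0 ∨ i = 1 := by
  rcases i with ⟨v, hv⟩
  interval_cases v
  · exact Or.inl rfl
  · exact Or.inr rfl

lemma plays_succ (π : Policy) (μ : Fin 2 → ℕ → ℝ) (t : ℕ) :
    plays π μ (t + 1) =
      (π (plays π μ t),
        μ (π (plays π μ t))
          (((plays π μ t).filter fun p => p.1 = π (plays π μ t)).length + 1))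
        :: plays π μ t := rfl

/-- number of arm-1 pulls in the first `t` rounds -/
def n1 (π : Policy) (μ : Fin 2 → ℕ → ℝ) (t : ℕ) : ℕ :=
  ((plays π μ t).filter fun p => p.1 = (1 : Fin 2)).length

lemma n1_mono (π : Policy) (μ : Fin 2 → ℕ → ℝ) {s t : ℕ} (h : s ≤ t) :
    n1 π μ s ≤ n1 π μ t := by
  induction t with
  | zero => simp_all
  | succ t ih =>
    rcases Nat.lt_or_ge s (t + 1) with h' | h'
    · refine le_trans (ih (by omega)) ?_
      unfold n1
      rw [plays_succ, List.filter_cons]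
      split
      · simp
      · simp
    · have : s = t + 1 := by omega
      subst this; rfl

lemma totalPayoff_succ (π : Policy) (μ : Fin 2 → ℕ → ℝ) (t : ℕ) :
    totalPayoff π μ (t + 1) =
      μ (π (plays π μ t))
        (((plays π μ t).filter fun p => p.1 = π (plays π μ t)).length + 1)
      + totalPayoff π μ t := by
  unfold totalPayoff
  rw [plays_succ]
  simp

lemma payB (π : Policy) : ∀ t, totalPayoff π muB t = ((t : ℝ) - (n1 π muB t)) / 2 := by
  intro t
  induction t with
  | zero => simp [totalPayoff, plays, n1]
  | succ t ih =>
    rw [totalPayoff_succ, ih]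
    have hst : n1 π muB (t+1)
        = (((π (plays π muB t), muB (π (plays π muB t))
            (((plays π muB t).filter fun p => p.1 = π (plays π muB t)).length + 1))
          :: plays π muB t).filter (fun p => p.1 = (1:Fin 2))).length := by
      unfold n1; rw [plays_succ]
    rcases fin2 (π (plays π muB t)) with h0 | h1
    · rw [hst, List.filter_cons]
      rw [h0]
      norm_num [muB, n1]
      ring
    · rw [hst, List.filter_cons]
      rw [h1]
      norm_num [muB, n1, show (1:Fin 2) ≠ 0 by decide]

lemma coupling (π : Policy) (T : ℕ) (h : n1 π muB T ≤ T / 3) :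
    ∀ t, t ≤ T → plays π (muA T) t = plays π muB t := by
  intro t
  induction t with
  | zero => intro _; rfl
  | succ t ih =>
    intro ht
    have heq := ih (by omega)
    rw [plays_succ, plays_succ, heq]
    rcases fin2 (π (plays π muB t)) with h0 | h1
    · rw [h0]
      simp [muA, muB]
    · rw [h1]
      have hstep : n1 π muB (t+1) = n1 π muB t + 1 := by
        unfold n1
        rw [plays_succ, List.filter_cons, h1]
        simp
      have hle : n1 π muB t + 1 ≤ T / 3 := by
        have := n1_mono π muB ht
        omega
      have : muA T 1 (((plays π muB t).filter fun p => p.1 = (1:Fin 2)).length + 1)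
           = muB 1 (((plays π muB t).filter fun p => p.1 = (1:Fin 2)).length + 1) := by
        have hle' : ((plays π muB t).filter fun p => p.1 = (1:Fin 2)).length + 1 ≤ T / 3 := hle
        simp [muA, muB, show (1:Fin 2) ≠ 0 by decide, hle']
      rw [this]

lemma totalPayoff_le (π : Policy) (μ : Fin 2 → ℕ → ℝ) (hμ : ∀ i n, μ i n ≤ 1) :
    ∀ t, totalPayoff π μ t ≤ t := by
  intro t
  induction t with
  | zero => simp [totalPayoff, plays]
  | succ t ih =>
    rw [totalPayoff_succ]
    push_cast
    have := hμ (π (plays π μ t))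
      (((plays π μ t).filter fun p => p.1 = π (plays π μ t)).length + 1)
    linarith

lemma opt_ge (μ : Fin 2 → ℕ → ℝ) (hμ : ∀ i n, μ i n ≤ 1) (T : ℕ) (π₀ : Policy) :
    totalPayoff π₀ μ T ≤ optPayoff μ T := by
  have hb : BddAbove (Set.range fun π' : Policy => totalPayoff π' μ T) := by
    refine ⟨(T : ℝ), ?_⟩
    rintro x ⟨π', rfl⟩
    exact totalPayoff_le π' μ hμ T
  exact le_ciSup hb π₀

lemma muA_le_one (T : ℕ) : ∀ i n, muA T i n ≤ 1 := by
  intro i n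
  unfold muA
  split
  · norm_num
  · split <;> norm_num

lemma muB_le_one : ∀ i n, muB i n ≤ 1 := by
  intro i n
  unfold muB
  split <;> norm_num

lemma pay_const0 : ∀ t, totalPayoff (fun _ => 0) muB t = (t : ℝ) / 2 := by
  intro t
  induction t with
  | zero => simp [totalPayoff, plays]
  | succ t ih =>
    rw [totalPayoff_succ, ih]
    norm_num [muB]
    push_cast
    ring

lemma pay_const1 (T : ℕ) : ∀ t,
    (((plays (fun _ => 1) (muA T) t).filter fun p => p.1 = (1 : Fin 2)).length = t)
    ∧ totalPayoff (fun _ => 1) (muA T) t = ∑ n ∈ Finset.range t, muA T 1 (n + 1) := by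
  intro t
  induction t with
  | zero => simp [totalPayoff, plays]
  | succ t ih =>
    obtain ⟨hc, hp⟩ := ih
    constructor
    · rw [plays_succ, List.filter_cons]
      simp [hc]
    · rw [totalPayoff_succ, hp, hc, Finset.sum_range_succ]
      ring

lemma sum_muA (T : ℕ) :
    ∑ n ∈ Finset.range T, muA T 1 (n + 1) = (T : ℝ) - (T / 3 : ℕ) := by
  have hterm : ∀ n, muA T 1 (n + 1) = if n < T / 3 then (0:ℝ) else 1 := by
    intro n
    simp only [muA, show (1:Fin 2) ≠ 0 by decide, if_false]
    congr 1
  simp only [hterm]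
  have key : ∀ t, T / 3 ≤ t →
      ∑ n ∈ Finset.range t, (if n < T / 3 then (0:ℝ) else 1) = (t : ℝ) - (T / 3 : ℕ) := by
    intro t ht
    induction t, ht using Nat.le_induction with
    | base =>
      rw [Finset.sum_eq_zero]
      · simp
      · intro n hn
        simp [Finset.mem_range.mp hn]
    | succ t ht ih =>
      rw [Finset.sum_range_succ, ih]
      have : ¬ t < T / 3 := by omega
      simp only [this, if_false]
      push_cast
      ring
  exact key T (Nat.div_le_self T 3)

/-- Non-learnability: any policy suffers regret at least ⌊T/12⌋ on one of the two
non-decreasing (non-concave) deterministic rested bandits. -/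
theorem stmt_16 (T : ℕ) (π : Policy) :
    ((T / 12 : ℕ) : ℝ) ≤
      max (optPayoff (muA T) T - totalPayoff π (muA T) T)
          (optPayoff muB T - totalPayoff π muB T) := by
  have hpayB := payB π T
  have hoptB : (T : ℝ) / 2 ≤ optPayoff muB T := by
    have := opt_ge muB muB_le_one T (fun _ => 0)
    rw [pay_const0 T] at this
    exact this
  by_cases h : n1 π muB T ≤ T / 3
  · -- Use bandit A
    refine le_trans ?_ (le_max_left _ _)
    have hA : totalPayoff π (muA T) T = totalPayoff π muB T := by
      unfold totalPayoff
      rw [coupling π T h T le_rfl]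
    have hoptA : (T : ℝ) - (T / 3 : ℕ) ≤ optPayoff (muA T) T := by
      have := opt_ge (muA T) (muA_le_one T) T (fun _ => 1)
      rw [(pay_const1 T T).2, sum_muA T] at this
      exact this
    have hn1 : (0 : ℝ) ≤ (n1 π muB T : ℝ) := by positivity
    have hnat : 12 * (T / 12) + 12 * (T / 3) ≤ 6 * T := by omega
    have hcast : 12 * ((T / 12 : ℕ) : ℝ) + 12 * ((T / 3 : ℕ) : ℝ) ≤ 6 * (T : ℝ) := by
      exact_mod_cast hnat
    rw [hA, hpayB]
    linarith
  · -- Use bandit B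
    push_neg at h
    refine le_trans ?_ (le_max_right _ _)
    have hnat : 2 * (T / 12) ≤ T / 3 + 1 := by omega
    have hn1 : (T / 3 : ℕ) + 1 ≤ (n1 π muB T : ℝ) := by exact_mod_cast h
    have hcast : 2 * ((T / 12 : ℕ) : ℝ) ≤ ((T / 3 : ℕ) : ℝ) + 1 := by exact_mod_cast hnat
    rw [hpayB]
    linarith
end

section
/- (Regret bound for deterministic rested rising bandits.) Under the rising rested deterministic setting, the regret of the optimistic algorithm using index $B_i(t) = \overline{\mu}_i(t) = \mu_i(N_{i,t-1}) + (t - N_{i,t-1})\gamma_i(N_{i,t-1}-1)$ (and $+\infty$ when $N_{i,t-1} < 2$) satisfies, for every $q \in [0,1]$: $R_{\bm\mu}(T) \le 2K + K T^q\, \Upsilon_{\bm\mu}(\lceil T/K \rceil, q)$. -/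
open Finset

lemma stmt18_gamma_mono (μ : ℕ → ℝ)
    (hconc : ∀ n, μ (n + 2) - μ (n + 1) ≤ μ (n + 1) - μ n) :
    ∀ j k, j ≤ k → μ (k + 1) - μ k ≤ μ (j + 1) - μ j := by
  intro j k hjk
  induction k with
  | zero => interval_cases j; rfl
  | succ k ih =>
    rcases Nat.lt_or_ge j (k + 1) with h | h
    · exact le_trans (hconc k) (ih (Nat.lt_succ_iff.mp h))
    · have : j = k + 1 := le_antisymm hjk h
      subst this; exact le_refl _

lemma stmt18_optimism (μ : ℕ → ℝ)
    (hconc : ∀ n, μ (n + 2) - μ (n + 1) ≤ μ (n + 1) - μ n)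
    (n : ℕ) (hn : 1 ≤ n) :
    ∀ d, μ (n + d) ≤ μ n + (d : ℝ) * (μ n - μ (n - 1)) := by
  intro d
  induction d with
  | zero => simp
  | succ d ih =>
    have h1 : μ (n + d + 1) - μ (n + d) ≤ μ n - μ (n - 1) := by
      have h := stmt18_gamma_mono μ hconc (n - 1) (n + d) (by omega)
      rwa [Nat.sub_add_cancel hn] at h
    have h2 : ((d : ℝ) + 1) * (μ n - μ (n - 1)) = (d : ℝ) * (μ n - μ (n - 1)) + (μ n - μ (n - 1)) := by ring
    push_cast
    have h3 : n + (d + 1) = n + d + 1 := by omega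
    rw [h3, h2]
    linarith

lemma stmt18_min_rpow (x q : ℝ) (hx : 0 ≤ x) (h0 : 0 ≤ q) (h1 : q ≤ 1) :
    min 1 x ≤ x ^ q := by
  rcases le_or_gt 1 x with h | h
  · exact le_trans (min_le_left _ _) (Real.one_le_rpow h h0)
  · rcases eq_or_lt_of_le hx with h0x | h0x
    · rw [← h0x]
      exact le_trans (min_le_right _ _) (Real.rpow_nonneg le_rfl q)
    · calc min 1 x ≤ x := min_le_right _ _
        _ = x ^ (1 : ℝ) := (Real.rpow_one x).symm
        _ ≤ x ^ q := Real.rpow_le_rpow_of_exponent_ge h0x h.le h1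

lemma stmt18_tangent (f : ℕ → ℝ) (hf0 : ∀ l, 0 ≤ f l)
    (hfa : ∀ j k, j ≤ k → f k ≤ f j) (m k : ℕ) :
    ∑ l ∈ Icc 1 k, f l ≤ ∑ l ∈ Icc 1 m, f l + ((k : ℝ) - (m : ℝ)) * f m := by
  have hsplit : ∀ a b : ℕ, a ≤ b →
      ∑ l ∈ Icc 1 a, f l + ∑ l ∈ Icc (a + 1) b, f l = ∑ l ∈ Icc 1 b, f l := by
    intro a b hab
    rw [show Icc 1 a = Ioc 0 a from Finset.Icc_add_one_left_eq_Ioc 0 a,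
        show Icc (a+1) b = Ioc a b from Finset.Icc_add_one_left_eq_Ioc a b,
        show Icc 1 b = Ioc 0 b from Finset.Icc_add_one_left_eq_Ioc 0 b]
    exact Finset.sum_Ioc_consecutive f (Nat.zero_le a) hab
  rcases le_total k m with h | h
  · have hs := hsplit k m h
    have hge : ((m : ℝ) - k) * f m ≤ ∑ l ∈ Icc (k + 1) m, f l := by
      have hcard : ((Icc (k+1) m).card : ℝ) = (m : ℝ) - k := by
        rw [Nat.card_Icc, Nat.cast_sub (by omega)]
        push_cast; ring
      calc ((m : ℝ) - k) * f m = (Icc (k+1) m).card • f m := by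
            rw [nsmul_eq_mul, hcard]
        _ ≤ ∑ l ∈ Icc (k + 1) m, f l :=
            Finset.card_nsmul_le_sum _ _ _ (fun l hl => hfa l m (mem_Icc.mp hl).2)
    linarith
  · have hs := hsplit m k h
    have hle : ∑ l ∈ Icc (m + 1) k, f l ≤ ((k : ℝ) - m) * f m := by
      have hcard : ((Icc (m+1) k).card : ℝ) = (k : ℝ) - m := by
        rw [Nat.card_Icc, Nat.cast_sub (by omega)]
        push_cast; ring
      calc ∑ l ∈ Icc (m + 1) k, f l ≤ (Icc (m+1) k).card • f m :=
            Finset.sum_le_card_nsmul _ _ _ (fun l hl => hfa m l (by have := (mem_Icc.mp hl).1; omega))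
        _ = ((k : ℝ) - m) * f m := by rw [nsmul_eq_mul, hcard]
    linarith

lemma stmt18_lemE (K m : ℕ) (f : ℕ → ℝ) (hf0 : ∀ l, 0 ≤ f l)
    (hfa : ∀ j k, j ≤ k → f k ≤ f j) (n : Fin K → ℕ)
    (h : ∑ i, n i ≤ K * m) :
    ∑ i, ∑ l ∈ Icc 1 (n i), f l ≤ (K : ℝ) * ∑ l ∈ Icc 1 m, f l := by
  calc ∑ i, ∑ l ∈ Icc 1 (n i), f l
      ≤ ∑ i : Fin K, (∑ l ∈ Icc 1 m, f l + ((n i : ℝ) - m) * f m) :=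
        Finset.sum_le_sum (fun i _ => stmt18_tangent f hf0 hfa m (n i))
    _ = (K : ℝ) * ∑ l ∈ Icc 1 m, f l + ((∑ i, (n i : ℝ)) - K * m) * f m := by
        rw [Finset.sum_add_distrib, Finset.sum_const, Finset.card_univ, Fintype.card_fin,
          nsmul_eq_mul, ← Finset.sum_mul, Finset.sum_sub_distrib, Finset.sum_const,
          Finset.card_univ, Fintype.card_fin, nsmul_eq_mul]
    _ ≤ (K : ℝ) * ∑ l ∈ Icc 1 m, f l := by
        have h1 : (∑ i, (n i : ℝ)) - (K : ℝ) * m ≤ 0 := by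
          have h2 : ((∑ i, n i : ℕ) : ℝ) ≤ ((K * m : ℕ) : ℝ) := Nat.cast_le.mpr h
          push_cast at h2
          linarith
        nlinarith [hf0 m]

/-- Regret bound for `R-ed-UCB` in the deterministic rested rising bandit setting.
`I t` is the arm pulled at round `t`, `N i t` the number of pulls of arm `i` in rounds
`1..t`, and `B i t` the optimistic index (which is treated as `+∞` when `N i (t-1) < 2`,
encoded by the hypotheses `hopt1`/`hopt2` describing the argmax rule). -/
theorem stmt_18 (K T : ℕ) (hK : 0 < K) (q : ℝ) (hq0 : 0 ≤ q) (hq1 : q ≤ 1)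
    (μ : Fin K → ℕ → ℝ) (hrange : ∀ i n, μ i n ∈ Set.Icc (0 : ℝ) 1)
    (hincr : ∀ i n, 0 ≤ μ i (n + 1) - μ i n)
    (hconc : ∀ i n, μ i (n + 2) - μ i (n + 1) ≤ μ i (n + 1) - μ i n)
    (I : ℕ → Fin K)
    (N : Fin K → ℕ → ℕ)
    (hN : ∀ i t, N i t = ((Finset.Icc 1 t).filter fun s => I s = i).card)
    (B : Fin K → ℕ → ℝ)
    (hB : ∀ i t, B i t = μ i (N i (t - 1)) +
      ((t : ℝ) - (N i (t - 1) : ℝ)) * (μ i (N i (t - 1)) - μ i (N i (t - 1) - 1)))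
    (hopt1 : ∀ t ∈ Finset.Icc 1 T, (∃ j, N j (t - 1) < 2) → N (I t) (t - 1) < 2)
    (hopt2 : ∀ t ∈ Finset.Icc 1 T, (∀ j, 2 ≤ N j (t - 1)) → ∀ j, B j t ≤ B (I t) t) :
    (Finset.univ.sup' (Finset.univ_nonempty_iff.mpr (Fin.pos_iff_nonempty.mp hK))
        fun i => ∑ l ∈ Finset.Icc 1 T, μ i l) -
      (∑ t ∈ Finset.Icc 1 T, μ (I t) (N (I t) t)) ≤
    2 * (K : ℝ) + (K : ℝ) * (T : ℝ) ^ q *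
      ∑ l ∈ Finset.Icc 1 (⌈(T : ℝ) / (K : ℝ)⌉₊ - 1),
        (Finset.univ.sup' (Finset.univ_nonempty_iff.mpr (Fin.pos_iff_nonempty.mp hK))
          fun i => (μ i (l + 1) - μ i l) ^ q) := by
  classical
  have hne : (Finset.univ : Finset (Fin K)).Nonempty :=
    Finset.univ_nonempty_iff.mpr (Fin.pos_iff_nonempty.mp hK)
  set M := ⌈(T : ℝ) / (K : ℝ)⌉₊ with hM
  set f : ℕ → ℝ := fun l => Finset.univ.sup'
      (Finset.univ_nonempty_iff.mpr (Fin.pos_iff_nonempty.mp hK))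
      (fun i => (μ i (l + 1) - μ i l) ^ q) with hf
  -- basic counting facts
  have hNstep : ∀ i t, N i (t + 1) = N i t + if I (t + 1) = i then 1 else 0 := by
    intro i t
    rw [hN, hN]
    have h1 : Finset.Icc 1 (t + 1) = insert (t + 1) (Finset.Icc 1 t) := by
      ext x; simp only [Finset.mem_Icc, Finset.mem_insert]; omega
    rw [h1, Finset.filter_insert]
    split
    · rw [Finset.card_insert_of_notMem (by simp)]
    · rfl
  have hNmono : ∀ i s t, s ≤ t → N i s ≤ N i t := by
    intro i s t hst
    rw [hN, hN]
    exact Finset.card_le_card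
      (Finset.filter_subset_filter _ (Finset.Icc_subset_Icc_right hst))
  have hNle : ∀ i t, N i t ≤ t := by
    intro i t
    rw [hN]
    calc ((Finset.Icc 1 t).filter fun s => I s = i).card
        ≤ (Finset.Icc 1 t).card := Finset.card_le_card (Finset.filter_subset _ _)
      _ = t := by rw [Nat.card_Icc]; omega
  have hNsum : ∀ t, ∑ i, N i t = t := by
    intro t
    calc ∑ i, N i t = ∑ i, ((Finset.Icc 1 t).filter fun s => I s = i).card := by
          simp only [hN]
      _ = (Finset.Icc 1 t).card :=
          (Finset.card_eq_sum_card_fiberwise (fun x _ => Finset.mem_univ (I x))).symm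
      _ = t := by rw [Nat.card_Icc]; omega
  have hNpull : ∀ t, 1 ≤ t → N (I t) t = N (I t) (t - 1) + 1 := by
    intro t ht
    obtain ⟨s, rfl⟩ : ∃ s, t = s + 1 := ⟨t - 1, by omega⟩
    have := hNstep (I (s + 1)) s
    simp only [if_pos rfl] at this
    simpa using this
  have hstrict : ∀ t₁ t₂ i, 1 ≤ t₁ → t₁ < t₂ → I t₁ = i → N i (t₁ - 1) < N i (t₂ - 1) := by
    intro t₁ t₂ i h1 h2 hI
    have ha : N i (t₁ - 1) < N i t₁ := by
      have h := hNpull t₁ h1; rw [hI] at h; omega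
    have hb : N i t₁ ≤ N i (t₂ - 1) := hNmono i t₁ (t₂ - 1) (by omega)
    omega
  -- nonnegativity and antitonicity of f
  have hf0 : ∀ l, 0 ≤ f l := by
    intro l
    rw [hf]
    exact le_trans (Real.rpow_nonneg (by linarith [hincr (⟨0, hK⟩ : Fin K) l]) q)
      (Finset.le_sup' (fun i => (μ i (l + 1) - μ i l) ^ q) (Finset.mem_univ (⟨0, hK⟩ : Fin K)))
  have hfmono : ∀ j k, j ≤ k → f k ≤ f j := by
    intro j k hjk
    apply Finset.sup'_le
    intro i _
    calc (μ i (k + 1) - μ i k) ^ q ≤ (μ i (j + 1) - μ i j) ^ q :=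
        Real.rpow_le_rpow (by linarith [hincr i k])
          (stmt18_gamma_mono (μ i) (hconc i) j k hjk) hq0
      _ ≤ f j := by
          rw [hf]
          exact Finset.le_sup' (fun i => (μ i (j + 1) - μ i j) ^ q) (Finset.mem_univ i)
  -- reduce to a fixed arm
  rw [sub_le_iff_le_add, Finset.sup'_le_iff]
  intro a _
  rw [← sub_le_iff_le_add, ← Finset.sum_sub_distrib]
  set p : ℕ → Prop := fun t => ∀ j, 2 ≤ N j (t - 1) with hp
  set Good := (Finset.Icc 1 T).filter p with hGood
  set Bad := (Finset.Icc 1 T).filter (fun t => ¬ p t) with hBad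
  -- bad rounds
  have hBadcard : Bad.card ≤ 2 * K := by
    have hmap : ∀ t ∈ Bad, (I t, N (I t) (t - 1)) ∈ Finset.univ ×ˢ Finset.range 2 := by
      intro t ht
      rw [hBad, Finset.mem_filter] at ht
      obtain ⟨htI, hnp⟩ := ht
      simp only [hp, not_forall, not_le] at hnp
      obtain ⟨j, hj⟩ := hnp
      have := hopt1 t htI ⟨j, by omega⟩
      simp only [Finset.mem_product, Finset.mem_univ, Finset.mem_range, true_and]
      exact this
    have hinj : Set.InjOn (fun t => (I t, N (I t) (t - 1))) Bad := by
      intro t₁ h₁ t₂ h₂ heq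
      simp only [Prod.mk.injEq] at heq
      obtain ⟨hIeq, hNeq⟩ := heq
      rw [hIeq] at hNeq
      by_contra hne'
      have h₁' := Finset.mem_Icc.mp (Finset.mem_of_mem_filter t₁ h₁)
      have h₂' := Finset.mem_Icc.mp (Finset.mem_of_mem_filter t₂ h₂)
      rcases lt_or_gt_of_ne hne' with h | h
      · have := hstrict t₁ t₂ (I t₂) (by omega) h hIeq
        omega
      · have := hstrict t₂ t₁ (I t₁) (by omega) h hIeq.symm
        rw [hIeq] at this
        omega
    calc Bad.card ≤ (Finset.univ ×ˢ Finset.range 2).card :=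
          Finset.card_le_card_of_injOn _ hmap hinj
      _ = 2 * K := by
          rw [Finset.card_product, Finset.card_univ, Fintype.card_fin, Finset.card_range]
          ring
  have hbadsum : ∑ t ∈ Bad, (μ a t - μ (I t) (N (I t) t)) ≤ 2 * (K : ℝ) := by
    calc ∑ t ∈ Bad, (μ a t - μ (I t) (N (I t) t)) ≤ ∑ t ∈ Bad, (1 : ℝ) :=
        Finset.sum_le_sum (fun t _ => by
          have h1 := (hrange a t).2
          have h2 := (hrange (I t) (N (I t) t)).1
          linarith)
      _ = (Bad.card : ℝ) := by rw [Finset.sum_const, nsmul_eq_mul, mul_one]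
      _ ≤ ((2 * K : ℕ) : ℝ) := Nat.cast_le.mpr hBadcard
      _ = 2 * (K : ℝ) := by push_cast; ring
  -- good rounds: per-round bound
  have hgood : ∀ t ∈ Good, μ a t - μ (I t) (N (I t) t)
      ≤ (T : ℝ) ^ q * f (N (I t) (t - 1) - 1) := by
    intro t ht
    rw [hGood, Finset.mem_filter] at ht
    obtain ⟨htI, hall⟩ := ht
    have htI' := Finset.mem_Icc.mp htI
    have hm2 : 2 ≤ N (I t) (t - 1) := hall (I t)
    have hn2 : 2 ≤ N a (t - 1) := hall a
    have hnt : N a (t - 1) ≤ t := le_trans (hNle a (t - 1)) (by omega)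
    -- optimism for arm a
    have hopt : μ a t ≤ B a t := by
      rw [hB]
      have h := stmt18_optimism (μ a) (hconc a) (N a (t - 1)) (by omega)
        (t - N a (t - 1))
      rw [Nat.add_sub_cancel' hnt] at h
      have hcast : ((t - N a (t - 1) : ℕ) : ℝ) = (t : ℝ) - (N a (t - 1) : ℝ) :=
        Nat.cast_sub hnt
      rw [hcast] at h
      exact h
    have hBle : B a t ≤ B (I t) t := hopt2 t htI hall a
    have hpull : N (I t) t = N (I t) (t - 1) + 1 := hNpull t (by omega)
    have hγ0 : 0 ≤ μ (I t) (N (I t) (t - 1)) - μ (I t) (N (I t) (t - 1) - 1) := by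
      have h := hincr (I t) (N (I t) (t - 1) - 1)
      have he : N (I t) (t - 1) - 1 + 1 = N (I t) (t - 1) := by omega
      rwa [he] at h
    have hBdiff : B (I t) t - μ (I t) (N (I t) t)
        ≤ (T : ℝ) * (μ (I t) (N (I t) (t - 1)) - μ (I t) (N (I t) (t - 1) - 1)) := by
      rw [hpull, hB]
      have h1 : μ (I t) (N (I t) (t - 1)) ≤ μ (I t) (N (I t) (t - 1) + 1) := by
        linarith [hincr (I t) (N (I t) (t - 1))]
      have h2 : (t : ℝ) - (N (I t) (t - 1) : ℝ) ≤ (T : ℝ) := by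
        have ht' : (t : ℝ) ≤ (T : ℝ) := Nat.cast_le.mpr htI'.2
        have hm' : (0 : ℝ) ≤ (N (I t) (t - 1) : ℝ) := Nat.cast_nonneg _
        linarith
      have h3 := mul_le_mul_of_nonneg_right h2 hγ0
      linarith
    have hr1 : μ a t - μ (I t) (N (I t) t) ≤ 1 := by
      have h1 := (hrange a t).2
      have h2 := (hrange (I t) (N (I t) t)).1
      linarith
    have hr2 : μ a t - μ (I t) (N (I t) t)
        ≤ (T : ℝ) * (μ (I t) (N (I t) (t - 1)) - μ (I t) (N (I t) (t - 1) - 1)) := by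
      linarith
    have hTγ : (0 : ℝ) ≤ (T : ℝ) * (μ (I t) (N (I t) (t - 1)) - μ (I t) (N (I t) (t - 1) - 1)) :=
      mul_nonneg (Nat.cast_nonneg T) hγ0
    calc μ a t - μ (I t) (N (I t) t)
        ≤ min 1 ((T : ℝ) * (μ (I t) (N (I t) (t - 1)) - μ (I t) (N (I t) (t - 1) - 1))) :=
          le_min hr1 hr2
      _ ≤ ((T : ℝ) * (μ (I t) (N (I t) (t - 1)) - μ (I t) (N (I t) (t - 1) - 1))) ^ q :=
          stmt18_min_rpow _ q hTγ hq0 hq1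
      _ = (T : ℝ) ^ q * (μ (I t) (N (I t) (t - 1)) - μ (I t) (N (I t) (t - 1) - 1)) ^ q :=
          Real.mul_rpow (Nat.cast_nonneg T) hγ0
      _ ≤ (T : ℝ) ^ q * f (N (I t) (t - 1) - 1) := by
          apply mul_le_mul_of_nonneg_left _ (Real.rpow_nonneg (Nat.cast_nonneg T) q)
          have he : N (I t) (t - 1) - 1 + 1 = N (I t) (t - 1) := by omega
          simp only [hf]
          rw [show (N (I t) (t - 1) - 1) + 1 = N (I t) (t - 1) from he]
          exact Finset.le_sup'
            (fun j => (μ j (N (I t) (t - 1)) - μ j (N (I t) (t - 1) - 1)) ^ q)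
            (Finset.mem_univ (I t))
  -- sum over good rounds
  have hgoodsum : ∑ t ∈ Good, f (N (I t) (t - 1) - 1)
      ≤ (K : ℝ) * ∑ l ∈ Finset.Icc 1 (M - 1), f l := by
    rcases Good.eq_empty_or_nonempty with he | hne'
    · rw [he, Finset.sum_empty]
      exact mul_nonneg (Nat.cast_nonneg K) (Finset.sum_nonneg (fun l _ => hf0 l))
    · have hge2 : ∀ j, 2 ≤ N j T := by
        obtain ⟨t₀, ht₀⟩ := hne'
        rw [hGood, Finset.mem_filter] at ht₀
        intro j
        have h1 := Finset.mem_Icc.mp ht₀.1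
        exact le_trans (ht₀.2 j) (hNmono j (t₀ - 1) T (by omega))
      have hTK : T ≤ K * M := by
        have h1 : (T : ℝ) / (K : ℝ) ≤ (M : ℝ) := Nat.le_ceil _
        have hK' : (0 : ℝ) < (K : ℝ) := by exact_mod_cast hK
        rw [div_le_iff₀ hK'] at h1
        have : (T : ℝ) ≤ ((K * M : ℕ) : ℝ) := by push_cast; linarith
        exact_mod_cast this
      have hT2 : 2 ≤ T := le_trans (hge2 (⟨0, hK⟩ : Fin K)) (hNle _ T)
      have hM1 : 1 ≤ M := by
        by_contra hM0
        have : M = 0 := by omega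
        rw [this, Nat.mul_zero] at hTK
        omega
      have hsum2 : ∑ i, (N i T - 2) + 2 * K = T := by
        have h1 : ∑ i, ((N i T - 2) + 2) = ∑ i, N i T :=
          Finset.sum_congr rfl (fun i _ => by have := hge2 i; omega)
        rw [Finset.sum_add_distrib, Finset.sum_const, Finset.card_univ,
          Fintype.card_fin, smul_eq_mul, hNsum T] at h1
        omega
      have hSig : ∑ i, (N i T - 2) ≤ K * (M - 1) := by
        obtain ⟨M', hM'⟩ : ∃ M', M = M' + 1 := ⟨M - 1, by omega⟩
        have he1 : M - 1 = M' := by omega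
        rw [he1]
        rw [hM', Nat.mul_add, Nat.mul_one] at hTK
        have h1 : ∑ i, (N i T - 2) + 2 * K = T := hsum2
        have h2 : T ≤ K * M' + K := hTK
        have h3 : K ≤ 2 * K := by omega
        linarith
      -- fiberwise decomposition
      rw [← Finset.sum_fiberwise_of_maps_to (g := I) (fun x _ => Finset.mem_univ (I x))]
      have step1 : ∀ i : Fin K, ∑ t ∈ Good.filter (fun t => I t = i), f (N (I t) (t - 1) - 1)
          ≤ ∑ l ∈ Finset.Icc 1 (N i T - 2), f l := by
        intro i
        have hcong : ∑ t ∈ Good.filter (fun t => I t = i), f (N (I t) (t - 1) - 1)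
            = ∑ t ∈ Good.filter (fun t => I t = i), f (N i (t - 1) - 1) :=
          Finset.sum_congr rfl (fun t ht => by rw [(Finset.mem_filter.mp ht).2])
        rw [hcong]
        have hinj : ∀ t₁ ∈ Good.filter (fun t => I t = i), ∀ t₂ ∈ Good.filter (fun t => I t = i),
            N i (t₁ - 1) - 1 = N i (t₂ - 1) - 1 → t₁ = t₂ := by
          intro t₁ h₁ t₂ h₂ heq
          rw [Finset.mem_filter, hGood, Finset.mem_filter] at h₁ h₂
          have e₁ := Finset.mem_Icc.mp h₁.1.1
          have e₂ := Finset.mem_Icc.mp h₂.1.1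
          have g₁ : 2 ≤ N i (t₁ - 1) := by have := h₁.1.2 i; omega
          have g₂ : 2 ≤ N i (t₂ - 1) := by have := h₂.1.2 i; omega
          by_contra hne'
          rcases lt_or_gt_of_ne hne' with h | h
          · have := hstrict t₁ t₂ i (by omega) h h₁.2; omega
          · have := hstrict t₂ t₁ i (by omega) h h₂.2; omega
        rw [← Finset.sum_image hinj]
        apply Finset.sum_le_sum_of_subset_of_nonneg
        · intro l hl
          obtain ⟨t, ht, rfl⟩ := Finset.mem_image.mp hl
          rw [Finset.mem_filter, hGood, Finset.mem_filter] at ht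
          have e := Finset.mem_Icc.mp ht.1.1
          have g : 2 ≤ N i (t - 1) := by have := ht.1.2 i; omega
          have hup : N i (t - 1) + 1 ≤ N i T := by
            have h1 : N i t = N i (t - 1) + 1 := by
              have := hNpull t (by omega); rw [ht.2] at this; exact this
            have h2 : N i t ≤ N i T := hNmono i t T (by omega)
            omega
          rw [Finset.mem_Icc]
          omega
        · intro l _ _; exact hf0 l
      calc ∑ i : Fin K, ∑ t ∈ Good.filter (fun t => I t = i), f (N (I t) (t - 1) - 1)
          ≤ ∑ i : Fin K, ∑ l ∈ Finset.Icc 1 (N i T - 2), f l :=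
            Finset.sum_le_sum (fun i _ => step1 i)
        _ ≤ (K : ℝ) * ∑ l ∈ Finset.Icc 1 (M - 1), f l :=
            stmt18_lemE K (M - 1) f hf0 hfmono (fun i => N i T - 2) hSig
  -- assemble
  have hsplit : ∑ t ∈ Finset.Icc 1 T, (μ a t - μ (I t) (N (I t) t))
      = ∑ t ∈ Good, (μ a t - μ (I t) (N (I t) t))
        + ∑ t ∈ Bad, (μ a t - μ (I t) (N (I t) t)) := by
    rw [hGood, hBad]
    exact (Finset.sum_filter_add_sum_filter_not _ _ _).symm
  have hgs : ∑ t ∈ Good, (μ a t - μ (I t) (N (I t) t))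
      ≤ (T : ℝ) ^ q * ((K : ℝ) * ∑ l ∈ Finset.Icc 1 (M - 1), f l) := by
    calc ∑ t ∈ Good, (μ a t - μ (I t) (N (I t) t))
        ≤ ∑ t ∈ Good, (T : ℝ) ^ q * f (N (I t) (t - 1) - 1) :=
          Finset.sum_le_sum hgood
      _ = (T : ℝ) ^ q * ∑ t ∈ Good, f (N (I t) (t - 1) - 1) := by
          rw [Finset.mul_sum]
      _ ≤ (T : ℝ) ^ q * ((K : ℝ) * ∑ l ∈ Finset.Icc 1 (M - 1), f l) :=
          mul_le_mul_of_nonneg_left hgoodsum (Real.rpow_nonneg (Nat.cast_nonneg T) q)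
  rw [hsplit]
  have : (T : ℝ) ^ q * ((K : ℝ) * ∑ l ∈ Finset.Icc 1 (M - 1), f l) + 2 * (K : ℝ)
      = 2 * (K : ℝ) + (K : ℝ) * (T : ℝ) ^ q * ∑ l ∈ Finset.Icc 1 (M - 1), f l := by ring
  linarith [hgs, hbadsum]
end
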